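/- Let E be a real Hilbert space, f : E → ℝ a differentiable function with gradient ∇f, and q ∈ E a strict local minimum of f, i.e. there is a neighborhood U of q such that f(x) > f(q) for every x ∈ U with x ≠ q. Let a ∈ ℝ and let χ : [a,∞) → E be differentiable with χ′(τ) = ∇f(χ(τ)) for all τ ≥ a, and suppose χ(τ) → q as τ → ∞. Then there exists T ≥ a such that χ(τ) = q for all τ ≥ T; in particular any such gradient trajectory converging to q is eventually constant equal to q. -/

import Mathlib

/-- A gradient trajectory converging to a strict local minimum `q` of `f`
is eventually constant equal to `q`. -/
theorem gradient_trajectory_eventually_const {E : Type*} [NormedAddCommGroup E]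
    [InnerProductSpace ℝ E] [CompleteSpace E]
    (f : E → ℝ) (hf : Differentiable ℝ f) (q : E)
    (hq : ∃ U ∈ nhds q, ∀ x ∈ U, x ≠ q → f q < f x)
    (a : ℝ) (χ : ℝ → E)
    (hχ : ∀ τ ∈ Set.Ici a, HasDerivWithinAt χ (gradient f (χ τ)) (Set.Ici a) τ)
    (hlim : Filter.Tendsto χ Filter.atTop (nhds q)) :
    ∃ T : ℝ, a ≤ T ∧ ∀ τ : ℝ, T ≤ τ → χ τ = q := by
  obtain ⟨U, hU, hUq⟩ := hq
  -- derivative of f ∘ χ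
  have hderiv : ∀ τ ∈ Set.Ici a,
      HasDerivWithinAt (f ∘ χ) (‖gradient f (χ τ)‖ ^ 2) (Set.Ici a) τ := by
    intro τ hτ
    have h1 : HasFDerivAt f ((InnerProductSpace.toDual ℝ E) (gradient f (χ τ))) (χ τ) :=
      (hf (χ τ)).hasGradientAt.hasFDerivAt
    have h2 := h1.comp_hasDerivWithinAt τ (hχ τ hτ)
    simpa only [InnerProductSpace.toDual_apply_apply, real_inner_self_eq_norm_sq] using h2
  -- f ∘ χ is monotone on Ici a
  have hmono : MonotoneOn (f ∘ χ) (Set.Ici a) := by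
    apply monotoneOn_of_hasDerivWithinAt_nonneg (convex_Ici a)
    · exact fun τ hτ => (hderiv τ hτ).continuousWithinAt
    · intro τ hτ
      exact ((hderiv τ (interior_subset hτ)).mono interior_subset)
    · intro τ _; positivity
  -- f (χ τ) ≤ f q for all τ ≥ a
  have hle : ∀ τ ∈ Set.Ici a, f (χ τ) ≤ f q := by
    intro τ hτ
    have htend : Filter.Tendsto (f ∘ χ) Filter.atTop (nhds (f q)) :=
      ((hf.continuous.tendsto q).comp hlim)
    refine ge_of_tendsto htend ?_
    filter_upwards [Filter.eventually_ge_atTop τ] with s hs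
    exact hmono hτ (le_trans hτ hs) hs
  -- eventually χ τ ∈ U
  obtain ⟨T₀, hT₀⟩ := (hlim.eventually_mem hU).exists_forall_of_atTop
  refine ⟨max a T₀, le_max_left _ _, fun τ hτ => ?_⟩
  by_contra hne
  have h1 := hUq (χ τ) (hT₀ τ (le_trans (le_max_right _ _) hτ)) hne
  have h2 := hle τ (le_trans (le_max_left _ _) hτ)
  linarith
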